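/- arXiv:1511.05541 — 3 statements merged into one kernel-verified Lean document; each statement's English description precedes it below -/
import Mathlib

section
/- Conversely, if y₁, …, yₙ are elements of a differential field (K, δ) of characteristic zero whose Wronskian vanishes, then y₁, …, yₙ are linearly dependent over the field of constants C of K. -/
/-- If the Wronskian of `y₁, …, yₙ` in a differential field of characteristic zero
vanishes, then `y₁, …, yₙ` are linearly dependent over the field of constants. -/
theorem linearDependent_over_constants_of_wronskian_eq_zero
    (K : Type*) [Field K] [CharZero K] (δ : K → K)
    (hadd : ∀ a b, δ (a + b) = δ a + δ b)
    (hmul : ∀ a b, δ (a * b) = a * δ b + b * δ a)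
    (n : ℕ) (y : Fin n → K)
    (hW : Matrix.det (Matrix.of fun i j : Fin n => δ^[(i : ℕ)] (y j)) = 0) :
    ∃ c : Fin n → K, (∀ i, δ (c i) = 0) ∧ c ≠ 0 ∧ ∑ i, c i * y i = 0 := by
  have hzero : δ 0 = 0 := by
    have := hadd 0 0
    simp only [add_zero] at this
    exact add_eq_left.mp this.symm
  have hone : δ 1 = 0 := by
    have := hmul 1 1
    simp only [one_mul, mul_one] at this
    exact add_eq_left.mp this.symm
  have hsum : ∀ {ι : Type} (s : Finset ι) (f : ι → K),
      δ (∑ x ∈ s, f x) = ∑ x ∈ s, δ (f x) := by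
    classical
    intro ι s f
    induction s using Finset.induction_on with
    | empty => simpa using hzero
    | @insert a s hx ih => rw [Finset.sum_insert hx, Finset.sum_insert hx, hadd, ih]
  induction n with
  | zero =>
    exfalso
    rw [Matrix.det_fin_zero] at hW
    exact one_ne_zero hW
  | succ m ih =>
    by_cases hW' : Matrix.det (Matrix.of fun i j : Fin m => δ^[(i : ℕ)] ((y ∘ Fin.castSucc) j)) = 0
    · obtain ⟨c, hc1, hc2, hc3⟩ := ih (y ∘ Fin.castSucc) hW'
      refine ⟨Fin.snoc c 0, ?_, ?_, ?_⟩
      · intro i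
        induction i using Fin.lastCases with
        | last => simpa using hzero
        | cast j => simpa using hc1 j
      · intro h
        apply hc2
        funext j
        have := congrFun h j.castSucc
        simpa using this
      · rw [Fin.sum_univ_castSucc]
        simpa using hc3
    · -- the smaller Wronskian is invertible
      obtain ⟨v, hv0, hv⟩ := (Matrix.exists_mulVec_eq_zero_iff).mpr hW
      have hvi : ∀ i : Fin (m + 1), ∑ j, δ^[(i : ℕ)] (y j) * v j = 0 := by
        intro i
        have := congrFun hv i
        simpa [Matrix.mulVec, dotProduct] using this
      have hker : ∀ w : Fin m → K,
          (∀ i : Fin m, ∑ j, δ^[(i : ℕ)] (y j.castSucc) * w j = 0) → w = 0 := by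
        intro w hw
        by_contra hwne
        apply hW'
        rw [← Matrix.exists_mulVec_eq_zero_iff]
        refine ⟨w, hwne, ?_⟩
        funext i
        simpa [Matrix.mulVec, dotProduct] using hw i
      have hvlast : v (Fin.last m) ≠ 0 := by
        intro hlast
        have : (fun j : Fin m => v j.castSucc) = 0 := by
          apply hker
          intro i
          have := hvi i.castSucc
          rw [Fin.sum_univ_castSucc] at this
          simpa [hlast] using this
        apply hv0
        funext j
        induction j using Fin.lastCases with
        | last => exact hlast
        | cast j => exact congrFun this j
      set c : Fin (m + 1) → K := fun j => v j / v (Fin.last m) with hc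
      have hR : ∀ i : Fin (m + 1), ∑ j, c j * δ^[(i : ℕ)] (y j) = 0 := by
        intro i
        have : ∑ j, c j * δ^[(i : ℕ)] (y j)
            = (∑ j, δ^[(i : ℕ)] (y j) * v j) / v (Fin.last m) := by
          rw [Finset.sum_div]
          refine Finset.sum_congr rfl fun j _ => ?_
          simp only [hc]
          ring
        rw [this, hvi, zero_div]
      have hclast : c (Fin.last m) = 1 := div_self hvlast
      have hdc : ∀ i : Fin m, ∑ j, δ (c j) * δ^[(i : ℕ)] (y j) = 0 := by
        intro i
        have h0 := hR i.castSucc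
        simp only [Fin.coe_castSucc] at h0
        have h1 : δ (∑ j, c j * δ^[(i : ℕ)] (y j)) = 0 := by rw [h0, hzero]
        rw [hsum] at h1
        have h2 : ∀ j, δ (c j * δ^[(i : ℕ)] (y j))
            = c j * δ^[(i : ℕ) + 1] (y j) + δ^[(i : ℕ)] (y j) * δ (c j) := by
          intro j
          rw [hmul, Function.iterate_succ_apply' δ]
        rw [Finset.sum_congr rfl fun j _ => h2 j, Finset.sum_add_distrib] at h1
        have h3 := hR ⟨(i : ℕ) + 1, by omega⟩
        simp only at h3
        rw [h3, zero_add] at h1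
        rw [← h1]
        exact Finset.sum_congr rfl fun j _ => (mul_comm _ _)
      have hdclast : δ (c (Fin.last m)) = 0 := by rw [hclast, hone]
      have hdc0 : (fun j : Fin m => δ (c j.castSucc)) = 0 := by
        apply hker
        intro i
        have := hdc i
        rw [Fin.sum_univ_castSucc] at this
        simpa [hdclast, mul_comm] using this
      refine ⟨c, ?_, ?_, ?_⟩
      · intro i
        induction i using Fin.lastCases with
        | last => exact hdclast
        | cast j => exact congrFun hdc0 j
      · intro h
        have := congrFun h (Fin.last m)
        rw [hclast] at this
        exact one_ne_zero this
      · have := hR 0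
        simpa using this
end

section
/- Let (U, δ) be a differential field of characteristic zero with constants C, let K ⊆ U be a differential subfield, and let E be an intermediate field with K ⊆ E ⊆ K(C) that is closed under δ. Then E is generated over K by its own constants: E = K(E ∩ C). -/
open Finset
open scoped Classical Pointwise

section Aux

variable {U : Type*} [Field U] {δ : U → U}

private lemma delta_zero' (hadd : ∀ a b : U, δ (a + b) = δ a + δ b) : δ 0 = 0 := by
  have h : δ 0 + 0 = δ 0 + δ 0 := by rw [add_zero]; simpa using hadd 0 0
  exact (add_left_cancel h).symm

private lemma delta_one' (hmul : ∀ a b : U, δ (a * b) = a * δ b + b * δ a) : δ 1 = 0 := by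
  have h : δ 1 + 0 = δ 1 + δ 1 := by rw [add_zero]; simpa using hmul 1 1
  exact (add_left_cancel h).symm

private lemma delta_sum' (hadd : ∀ a b : U, δ (a + b) = δ a + δ b)
    (hzero : δ 0 = 0) {ι : Type*} (s : Finset ι) (f : ι → U) :
    δ (∑ i ∈ s, f i) = ∑ i ∈ s, δ (f i) := by
  induction s using Finset.cons_induction with
  | empty => simpa
  | cons a s ha ih => rw [Finset.sum_cons, Finset.sum_cons, hadd, ih]

/-- Linear disjointness core: a nontrivial `E`-linear relation among constants yields a
nontrivial relation with constant coefficients lying in `E`. -/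
private lemma LD (hadd : ∀ a b : U, δ (a + b) = δ a + δ b)
    (hmul : ∀ a b : U, δ (a * b) = a * δ b + b * δ a)
    (E : Subfield U) (hEδ : ∀ x ∈ E, δ x ∈ E) :
    ∀ (N n : ℕ) (d g : Fin n → U),
      (univ.filter (fun l => g l ≠ 0)).card ≤ N →
      (∀ l, δ (d l) = 0) → (∀ l, g l ∈ E) → (∑ l, g l * d l) = 0 → (∃ l, g l ≠ 0) →
      ∃ c : Fin n → U, (∀ l, c l ∈ E) ∧ (∀ l, δ (c l) = 0) ∧
        (∑ l, c l * d l) = 0 ∧ ∃ l, c l ≠ 0 := by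
  intro N
  induction N with
  | zero =>
    intro n d g hcard hd hg hsum ⟨l0, hl0⟩
    exfalso
    have hm : l0 ∈ univ.filter (fun l => g l ≠ 0) := by
      simp only [mem_filter, mem_univ, true_and]; exact hl0
    have := Finset.card_pos.mpr ⟨l0, hm⟩
    omega
  | succ N ih =>
    intro n d g hcard hd hg hsum ⟨l0, hl0⟩
    set h : Fin n → U := fun l => g l / g l0 with hh
    have hhE : ∀ l, h l ∈ E := fun l => E.div_mem (hg l) (hg l0)
    have hhsum : ∑ l, h l * d l = 0 := by
      have e : ∑ l, h l * d l = (g l0)⁻¹ * ∑ l, g l * d l := by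
        rw [Finset.mul_sum]
        refine Finset.sum_congr rfl fun l _ => ?_
        simp only [hh]; field_simp
      rw [e, hsum, mul_zero]
    set g' : Fin n → U := fun l => δ (h l) with hg'
    have hg'E : ∀ l, g' l ∈ E := fun l => hEδ _ (hhE l)
    have hg'sum : ∑ l, g' l * d l = 0 := by
      have h1 : δ (∑ l, h l * d l) = ∑ l, δ (h l * d l) :=
        delta_sum' hadd (delta_zero' hadd) _ _
      rw [hhsum, delta_zero' hadd] at h1
      have h2 : ∀ l, δ (h l * d l) = g' l * d l := fun l => by
        rw [hmul, hd l, mul_zero, zero_add, mul_comm]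
      rw [Finset.sum_congr rfl fun l _ => h2 l] at h1
      exact h1.symm
    by_cases hc : ∀ l, g' l = 0
    · refine ⟨h, hhE, fun l => hc l, hhsum, ⟨l0, ?_⟩⟩
      simp only [hh, div_self hl0]
      exact one_ne_zero
    · push_neg at hc
      refine ih n d g' ?_ hd hg'E hg'sum hc
      have hsub : univ.filter (fun l => g' l ≠ 0) ⊆
          (univ.filter (fun l => g l ≠ 0)).erase l0 := by
        intro l hl
        simp only [mem_filter, mem_univ, true_and] at hl
        rw [Finset.mem_erase]
        constructor
        · rintro rfl
          apply hl
          simp only [hg', hh, div_self hl0]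
          exact delta_one' hmul
        · simp only [mem_filter, mem_univ, true_and]
          intro hgl
          apply hl
          simp only [hg', hh, hgl, zero_div]
          exact delta_zero' hadd
      have hl0mem : l0 ∈ univ.filter (fun l => g l ≠ 0) := by
        simp only [mem_filter, mem_univ, true_and]; exact hl0
      have := Finset.card_le_card hsub
      rw [Finset.card_erase_of_mem hl0mem] at this
      omega

/-- Main induction: if `x ∈ E` satisfies `x * q = p` where `p, q` are `F`-linear
combinations of constants and `q ≠ 0`, then `x ∈ F = K(E ∩ C)`. -/
private lemma main_ind (hadd : ∀ a b : U, δ (a + b) = δ a + δ b)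
    (hmul : ∀ a b : U, δ (a * b) = a * δ b + b * δ a)
    (K E : Subfield U) (hEδ : ∀ x ∈ E, δ x ∈ E) (hKE : K ≤ E) :
    ∀ (n : ℕ) (d b a : Fin n → U), (∀ l, δ (d l) = 0) →
      (∀ l, b l ∈ Subfield.closure ((K : Set U) ∪ ((E : Set U) ∩ {x : U | δ x = 0}))) →
      (∀ l, a l ∈ Subfield.closure ((K : Set U) ∪ ((E : Set U) ∩ {x : U | δ x = 0}))) →
      ∀ x ∈ E, x * (∑ l, b l * d l) = ∑ l, a l * d l → (∑ l, b l * d l) ≠ 0 →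
      x ∈ Subfield.closure ((K : Set U) ∪ ((E : Set U) ∩ {x : U | δ x = 0})) := by
  set F := Subfield.closure ((K : Set U) ∪ ((E : Set U) ∩ {x : U | δ x = 0})) with hF
  have hFE : F ≤ E := by
    rw [hF]
    refine Subfield.closure_le.mpr ?_
    rintro y (hy | hy)
    · exact hKE hy
    · exact hy.1
  intro n
  induction n with
  | zero =>
    intro d b a _ _ _ x _ _ hne
    exact absurd (by simp) hne
  | succ n ih =>
    intro d b a hd hb ha x hxE heq hne
    set g : Fin (n + 1) → U := fun l => x * b l - a l with hg
    have hgE : ∀ l, g l ∈ E := fun l =>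
      E.sub_mem (E.mul_mem hxE (hFE (hb l))) (hFE (ha l))
    have hgsum : ∑ l, g l * d l = 0 := by
      have : ∑ l, g l * d l = x * (∑ l, b l * d l) - ∑ l, a l * d l := by
        rw [Finset.mul_sum, ← Finset.sum_sub_distrib]
        exact Finset.sum_congr rfl fun l _ => by simp only [hg]; ring
      rw [this, heq, sub_self]
    by_cases hA : ∀ l, g l = 0
    · obtain ⟨l, -, hl⟩ := Finset.exists_ne_zero_of_sum_ne_zero hne
      have hbl : b l ≠ 0 := fun h0 => hl (by rw [h0, zero_mul])
      have hxl : x * b l = a l := by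
        have h0 := hA l; simp only [hg] at h0; exact sub_eq_zero.mp h0
      have : x = a l / b l := by field_simp [hxl]; exact hxl
      rw [this]
      exact F.div_mem (ha l) (hb l)
    · push_neg at hA
      obtain ⟨c, hcE, hcδ, hcsum, l1, hcl1⟩ :=
        LD hadd hmul E hEδ (univ.filter (fun l => g l ≠ 0)).card (n + 1) d g le_rfl hd hgE hgsum hA
      have hcF : ∀ l, c l ∈ F := fun l =>
        Subfield.subset_closure (Or.inr ⟨hcE l, hcδ l⟩)
      have hinv : c l1 * (c l1)⁻¹ = 1 := mul_inv_cancel₀ hcl1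
      set d' : Fin n → U := fun i => d (l1.succAbove i) with hd'
      set b' : Fin n → U := fun i =>
        b (l1.succAbove i) - b l1 * (c l1)⁻¹ * c (l1.succAbove i) with hb'
      set a' : Fin n → U := fun i =>
        a (l1.succAbove i) - a l1 * (c l1)⁻¹ * c (l1.succAbove i) with ha'
      have ec := Fin.sum_univ_succAbove (fun l => c l * d l) l1
      rw [hcsum] at ec
      have eb := Fin.sum_univ_succAbove (fun l => b l * d l) l1
      have ea := Fin.sum_univ_succAbove (fun l => a l * d l) l1
      have key : ∀ (u : Fin (n+1) → U),
          (∑ l, u l * d l = u l1 * d l1 + ∑ i, u (l1.succAbove i) * d (l1.succAbove i)) →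
          ∑ i, (fun i => u (l1.succAbove i) - u l1 * (c l1)⁻¹ * c (l1.succAbove i)) i * d' i
            = ∑ l, u l * d l := by
        intro u eu
        have expand : ∑ i, (u (l1.succAbove i) - u l1 * (c l1)⁻¹ * c (l1.succAbove i)) * d' i
            = (∑ i, u (l1.succAbove i) * d (l1.succAbove i))
              - u l1 * (c l1)⁻¹ * ∑ i, c (l1.succAbove i) * d (l1.succAbove i) := by
          rw [Finset.mul_sum, ← Finset.sum_sub_distrib]
          exact Finset.sum_congr rfl fun i _ => by simp only [hd']; ring
        simp only [expand]
        linear_combination -eu + u l1 * (c l1)⁻¹ * ec + u l1 * d l1 * hinv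
      have keyb : ∑ i, b' i * d' i = ∑ l, b l * d l := key b eb
      have keya : ∑ i, a' i * d' i = ∑ l, a l * d l := key a ea
      refine ih d' b' a' (fun i => hd _) (fun i => ?_) (fun i => ?_) x hxE ?_ ?_
      · exact F.sub_mem (hb _) (F.mul_mem (F.mul_mem (hb l1) (F.inv_mem (hcF l1))) (hcF _))
      · exact F.sub_mem (ha _) (F.mul_mem (F.mul_mem (ha l1) (F.inv_mem (hcF l1))) (hcF _))
      · rw [keyb, keya]; exact heq
      · rw [keyb]; exact hne

end Aux

section Repr

variable {U : Type*} [Field U] {δ : U → U}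

private lemma exists_ratio (hadd : ∀ a b : U, δ (a + b) = δ a + δ b)
    (hmul : ∀ a b : U, δ (a * b) = a * δ b + b * δ a) (K : Subfield U) :
    ∀ x ∈ Subfield.closure ((K : Set U) ∪ {x : U | δ x = 0}),
      ∃ p ∈ Submodule.span (↥K) {x : U | δ x = 0},
        ∃ q ∈ Submodule.span (↥K) {x : U | δ x = 0}, q ≠ 0 ∧ x * q = p := by
  set C : Set U := {x : U | δ x = 0} with hC
  set M : Submodule (↥K) U := Submodule.span (↥K) C with hM
  have h1C : (1 : U) ∈ C := delta_one' hmul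
  have h1M : (1 : U) ∈ M := Submodule.subset_span h1C
  have hmulM : ∀ p ∈ M, ∀ q ∈ M, p * q ∈ M := by
    intro p hp q hq
    have h2 : M * M = Submodule.span (↥K) (C * C) := Submodule.span_mul_span _ _ _
    have h3 : Submodule.span (↥K) (C * C) ≤ M := by
      refine Submodule.span_le.mpr ?_
      rintro _ ⟨c1, hc1, c2, hc2, rfl⟩
      refine Submodule.subset_span ?_
      show δ (c1 * c2) = 0
      rw [hmul, hc1, hc2, mul_zero, mul_zero, add_zero]
    exact h3 (h2 ▸ Submodule.mul_mem_mul hp hq)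
  set T : Subfield U :=
    { carrier := {x : U | ∃ p ∈ M, ∃ q ∈ M, q ≠ 0 ∧ x * q = p}
      zero_mem' := ⟨0, M.zero_mem, 1, h1M, one_ne_zero, by rw [zero_mul]⟩
      one_mem' := ⟨1, h1M, 1, h1M, one_ne_zero, by rw [one_mul]⟩
      add_mem' := by
        rintro x y ⟨p1, hp1, q1, hq1, hq1n, he1⟩ ⟨p2, hp2, q2, hq2, hq2n, he2⟩
        refine ⟨p1 * q2 + p2 * q1, M.add_mem (hmulM _ hp1 _ hq2) (hmulM _ hp2 _ hq1),
          q1 * q2, hmulM _ hq1 _ hq2, mul_ne_zero hq1n hq2n, ?_⟩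
        rw [← he1, ← he2]; ring
      mul_mem' := by
        rintro x y ⟨p1, hp1, q1, hq1, hq1n, he1⟩ ⟨p2, hp2, q2, hq2, hq2n, he2⟩
        refine ⟨p1 * p2, hmulM _ hp1 _ hp2, q1 * q2, hmulM _ hq1 _ hq2,
          mul_ne_zero hq1n hq2n, ?_⟩
        rw [← he1, ← he2]; ring
      neg_mem' := by
        rintro x ⟨p, hp, q, hq, hqn, he⟩
        exact ⟨-p, M.neg_mem hp, q, hq, hqn, by rw [neg_mul, he]⟩
      inv_mem' := by
        intro x ⟨p, hp, q, hq, hqn, he⟩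
        by_cases hx : x = 0
        · exact ⟨0, M.zero_mem, 1, h1M, one_ne_zero, by rw [hx, inv_zero, zero_mul]⟩
        · have hpn : p ≠ 0 := by
            rw [← he]; exact mul_ne_zero hx hqn
          refine ⟨q, hq, p, hp, hpn, ?_⟩
          rw [← he]; field_simp }
  have hsub : Subfield.closure ((K : Set U) ∪ C) ≤ T := by
    refine Subfield.closure_le.mpr ?_
    rintro y (hy | hy)
    · refine ⟨(⟨y, hy⟩ : ↥K) • (1 : U), M.smul_mem _ h1M, 1, h1M, one_ne_zero, ?_⟩
      show y * 1 = (⟨y, hy⟩ : ↥K) • (1 : U)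
      show y * 1 = y * 1
      rfl
    · exact ⟨y, Submodule.subset_span hy, 1, h1M, one_ne_zero, by rw [mul_one]⟩
  exact fun x hx => hsub hx

end Repr

/-- If `E` is a differential intermediate field with `K ⊆ E ⊆ K(C)`, where `C` is the
set of constants of the ambient differential field, then `E` is generated over `K`
by its own constants: `E = K(E ∩ C)`. -/
theorem intermediate_field_generated_by_its_constants
    (U : Type*) [Field U] [CharZero U] (δ : U → U)
    (hadd : ∀ a b, δ (a + b) = δ a + δ b)
    (hmul : ∀ a b, δ (a * b) = a * δ b + b * δ a)
    (K E : Subfield U)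
    (hK : ∀ x ∈ K, δ x ∈ K)
    (hEδ : ∀ x ∈ E, δ x ∈ E)
    (hKE : K ≤ E)
    (hE : E ≤ Subfield.closure ((K : Set U) ∪ {x : U | δ x = 0})) :
    E = Subfield.closure ((K : Set U) ∪ ((E : Set U) ∩ {x : U | δ x = 0})) := by
  set F := Subfield.closure ((K : Set U) ∪ ((E : Set U) ∩ {x : U | δ x = 0})) with hF
  apply le_antisymm
  · intro x hx
    obtain ⟨p, hp, q, hq, hqn, hxq⟩ := exists_ratio hadd hmul K x (hE hx)
    rw [Submodule.mem_span_set'] at hp hq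
    obtain ⟨np, fp, gp, hpe⟩ := hp
    obtain ⟨nq, fq, gq, hqe⟩ := hq
    -- combine into one family of constants indexed by `Fin (nq + np)`
    set d : Fin (nq + np) → U := Fin.append (fun i => (gq i : U)) (fun j => (gp j : U)) with hd
    set b : Fin (nq + np) → U := Fin.append (fun i => (fq i : U)) (fun _ => (0 : U)) with hb
    set a : Fin (nq + np) → U := Fin.append (fun _ => (0 : U)) (fun j => (fp j : U)) with ha
    have hbd : ∑ l, b l * d l = q := by
      rw [Fin.sum_univ_add]
      simp only [hb, hd, Fin.append_left, Fin.append_right, zero_mul,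
        Finset.sum_const_zero, add_zero]
      rw [← hqe]
      exact Finset.sum_congr rfl fun i _ => rfl
    have had : ∑ l, a l * d l = p := by
      rw [Fin.sum_univ_add]
      simp only [ha, hd, Fin.append_left, Fin.append_right, zero_mul,
        Finset.sum_const_zero, zero_add]
      rw [← hpe]
      exact Finset.sum_congr rfl fun j _ => rfl
    refine main_ind hadd hmul K E hEδ hKE (nq + np) d b a ?_ ?_ ?_ x hx ?_ ?_
    · intro l
      refine Fin.addCases ?_ ?_ l
      · intro i; simpa only [hd, Fin.append_left, Set.mem_setOf_eq] using (gq i).2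
      · intro j; simpa only [hd, Fin.append_right, Set.mem_setOf_eq] using (gp j).2
    · intro l
      refine Fin.addCases ?_ ?_ l
      · intro i
        simp only [hb, Fin.append_left]
        exact Subfield.subset_closure (Or.inl (fq i).2)
      · intro j
        simp only [hb, Fin.append_right]
        exact F.zero_mem
    · intro l
      refine Fin.addCases ?_ ?_ l
      · intro i
        simp only [ha, Fin.append_left]
        exact F.zero_mem
      · intro j
        simp only [ha, Fin.append_right]
        exact Subfield.subset_closure (Or.inl (fp j).2)
    · rw [hbd, had]; exact hxq
    · rw [hbd]; exact hqn
  · refine Subfield.closure_le.mpr ?_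
    rintro y (hy | hy)
    · exact hKE hy
    · exact hy.1
end

section
/- Let (U, δ) be a differential field of characteristic zero with constants C, and K ⊆ L ⊆ U differential subfields. Then K(C) ∩ L = K if and only if C_K = C_L, i.e., K and L have the same constants. -/
set_option linter.unusedSectionVars false
set_option maxHeartbeats 1000000

section auxDiff
variable {U : Type*} [Field U] {δ : U → U}
  (hadd : ∀ a b, δ (a + b) = δ a + δ b)
  (hmul : ∀ a b, δ (a * b) = a * δ b + b * δ a)

include hadd in
lemma aux_dzero : δ 0 = 0 := by
  have := hadd 0 0; simpa using this

include hmul in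
lemma aux_done : δ 1 = 0 := by
  have := hmul 1 1; simpa using this

include hadd in
lemma aux_dneg (a : U) : δ (-a) = - δ a := by
  have := hadd a (-a); simp [aux_dzero hadd] at this; linear_combination -this

include hadd hmul in
lemma aux_dinv {a : U} (h : δ a = 0) : δ a⁻¹ = 0 := by
  rcases eq_or_ne a 0 with rfl | ha
  · simpa using aux_dzero hadd
  · have h1 := hmul a a⁻¹
    rw [mul_inv_cancel₀ ha, aux_done hmul, h] at h1
    simp at h1
    rcases h1 with h1 | h1
    · exact absurd h1 ha
    · exact h1

include hadd in
lemma aux_dsum {ι : Type*} (s : Finset ι) (f : ι → U) :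
    δ (∑ i ∈ s, f i) = ∑ i ∈ s, δ (f i) := by
  classical
  induction s using Finset.induction_on with
  | empty => simpa using aux_dzero hadd
  | insert _ _ h ih => rw [Finset.sum_insert h, hadd, ih, Finset.sum_insert h]

include hadd hmul in
/-- Constants linearly independent over `C_L` stay linearly independent over `L`. -/
lemma aux_indep {ι : Type*} [Fintype ι] (L : Subfield U) (hL : ∀ x ∈ L, δ x ∈ L)
    (e : ι → U) (he : ∀ i, δ (e i) = 0)
    (hind : ∀ b : ι → U, (∀ i, b i ∈ L ∧ δ (b i) = 0) → ∑ i, b i * e i = 0 → ∀ i, b i = 0) :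
    ∀ (a : ι → U), (∀ i, a i ∈ L) → ∑ i, a i * e i = 0 → ∀ i, a i = 0 := by
  classical
  suffices H : ∀ (N : ℕ) (a : ι → U), (Finset.univ.filter (fun i => a i ≠ 0)).card ≤ N →
      (∀ i, a i ∈ L) → ∑ i, a i * e i = 0 → ∀ i, a i = 0 by
    intro a haL hsum
    exact H _ a le_rfl haL hsum
  intro N
  induction N with
  | zero =>
    intro a hcard haL hsum i
    by_contra hne
    have : i ∈ Finset.univ.filter (fun i => a i ≠ 0) := by simp [hne]
    have := Finset.card_pos.mpr ⟨i, this⟩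
    omega
  | succ N ih =>
    intro a hcard haL hsum
    by_cases hz : ∀ i, a i = 0
    · exact hz
    push_neg at hz
    obtain ⟨j, hj⟩ := hz
    set b : ι → U := fun i => δ (a i / a j) with hb
    have hsum2 : ∑ i, (a i / a j) * e i = 0 := by
      simp only [div_mul_eq_mul_div, ← Finset.sum_div, hsum, zero_div]
    have hbsum : ∑ i, b i * e i = 0 := by
      have h1 : δ (∑ i, (a i / a j) * e i) = 0 := by rw [hsum2]; exact aux_dzero hadd
      rw [aux_dsum hadd] at h1
      have h2 : ∀ i, δ ((a i / a j) * e i) = b i * e i := by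
        intro i; rw [hmul, he i, mul_zero, zero_add, mul_comm]
      rw [Finset.sum_congr rfl (fun i _ => h2 i)] at h1
      exact h1
    have hbL : ∀ i, b i ∈ L := fun i => hL _ (L.div_mem (haL i) (haL j))
    have hsubset : Finset.univ.filter (fun i => b i ≠ 0) ⊆
        (Finset.univ.filter (fun i => a i ≠ 0)).erase j := by
      intro i hi
      simp only [Finset.mem_filter, Finset.mem_univ, true_and] at hi
      rw [Finset.mem_erase]
      constructor
      · rintro rfl
        exact hi (by simp [hb, div_self hj, aux_done hmul])
      · simp only [Finset.mem_filter, Finset.mem_univ, true_and]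
        rintro h0
        exact hi (by simp [hb, h0, aux_dzero hadd])
    have hcard2 : (Finset.univ.filter (fun i => b i ≠ 0)).card ≤ N := by
      have h3 := Finset.card_le_card hsubset
      have h4 : j ∈ Finset.univ.filter (fun i => a i ≠ 0) := by simp [hj]
      have h5 := Finset.card_erase_of_mem h4
      omega
    have hb0 : ∀ i, b i = 0 := ih b hcard2 hbL hbsum
    have hfin : ∀ i, a i / a j = 0 :=
      hind _ (fun i => ⟨L.div_mem (haL i) (haL j), hb0 i⟩) hsum2
    have := hfin j
    rw [div_self hj] at this
    exact absurd this one_ne_zero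

include hmul in
lemma aux_span_mul_self (K : Subfield U) :
    ∀ x ∈ Submodule.span (↥K) {u : U | δ u = 0}, ∀ y ∈ Submodule.span (↥K) {u : U | δ u = 0},
      x * y ∈ Submodule.span (↥K) {u : U | δ u = 0} := by
  intro x hx y hy
  have h := Submodule.mul_mem_mul hx hy
  rw [Submodule.span_mul_span] at h
  refine Submodule.span_mono ?_ h
  rintro z ⟨u, hu, v, hv, rfl⟩
  simp only [Set.mem_setOf_eq] at *
  rw [hmul, hu, hv, mul_zero, mul_zero, add_zero]

include hmul in
lemma aux_subring_mem_span (K : Subfield U) {x : U}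
    (hx : x ∈ Subring.closure ((K : Set U) ∪ {u : U | δ u = 0})) :
    x ∈ Submodule.span (↥K) {u : U | δ u = 0} := by
  induction hx using Subring.closure_induction with
  | mem u hu =>
    rcases hu with hu | hu
    · have h1 : (1 : U) ∈ ({u : U | δ u = 0} : Set U) := aux_done hmul
      have := Submodule.smul_mem _ (⟨u, hu⟩ : ↥K) (Submodule.subset_span h1)
      have e : (⟨u, hu⟩ : ↥K) • (1 : U) = u := by
        rw [show (⟨u, hu⟩ : ↥K) • (1 : U) = u * 1 from rfl, mul_one]
      rwa [e] at this
    · exact Submodule.subset_span hu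
  | zero => exact Submodule.zero_mem _
  | one => exact Submodule.subset_span (aux_done hmul)
  | add _ _ _ _ h1 h2 => exact Submodule.add_mem _ h1 h2
  | neg _ _ h1 => exact Submodule.neg_mem _ h1
  | mul x' y' _ _ h1 h2 => exact aux_span_mul_self hmul K _ h1 _ h2

include hadd hmul in
/-- The hard direction: if `C_K = C_L` then `K(C) ∩ L ⊆ K`. -/
lemma aux_mem_K (K L : Subfield U)
    (hL : ∀ x ∈ L, δ x ∈ L) (hKL : K ≤ L)
    (hsame : (K : Set U) ∩ {u : U | δ u = 0} = (L : Set U) ∩ {u : U | δ u = 0})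
    {x : U} (hx : x ∈ Subfield.closure ((K : Set U) ∪ {u : U | δ u = 0}))
    (hxL : x ∈ L) : x ∈ K := by
  classical
  have hCLK : ∀ u, u ∈ L → δ u = 0 → u ∈ K := by
    intro u h1 h2
    have hmem : u ∈ (L : Set U) ∩ {u : U | δ u = 0} := ⟨h1, h2⟩
    rw [← hsame] at hmem
    exact hmem.1
  obtain ⟨r, hr, s, hs, hdiv⟩ := Subfield.mem_closure_iff.mp hx
  by_cases hs0 : s = 0
  · rw [← hdiv, hs0, div_zero]; exact K.zero_mem
  have hrs : r ∈ Submodule.span (↥K) {u : U | δ u = 0} := aux_subring_mem_span hmul K hr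
  have hss : s ∈ Submodule.span (↥K) {u : U | δ u = 0} := aux_subring_mem_span hmul K hs
  obtain ⟨f, hfsupp, hfsum⟩ := Submodule.mem_span_set.mp hrs
  obtain ⟨g, hgsupp, hgsum⟩ := Submodule.mem_span_set.mp hss
  set CL : Subfield U :=
    { carrier := {u : U | u ∈ L ∧ δ u = 0}
      zero_mem' := ⟨L.zero_mem, aux_dzero hadd⟩
      one_mem' := ⟨L.one_mem, aux_done hmul⟩
      add_mem' := fun ha hb => ⟨L.add_mem ha.1 hb.1, by rw [hadd, ha.2, hb.2, add_zero]⟩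
      mul_mem' := fun ha hb =>
        ⟨L.mul_mem ha.1 hb.1, by rw [hmul, ha.2, hb.2, mul_zero, mul_zero, add_zero]⟩
      neg_mem' := fun ha => ⟨L.neg_mem ha.1, by rw [aux_dneg hadd, ha.2, neg_zero]⟩
      inv_mem' := fun a ha => ⟨L.inv_mem ha.1, aux_dinv hadd hmul ha.2⟩ } with hCL
  set s0 : Set U := ↑(f.support ∪ g.support) with hs0def
  have hs0C : s0 ⊆ {u : U | δ u = 0} := by
    intro u hu
    rcases Finset.mem_union.mp hu with h | h
    · exact hfsupp h
    · exact hgsupp h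
  obtain ⟨bs, hbsub, hbspan, hbli⟩ := exists_linearIndependent (↥CL) s0
  haveI : Fintype bs :=
    (Set.Finite.subset (f.support ∪ g.support).finite_toSet hbsub).fintype
  set e : bs → U := Subtype.val with he_def
  have he : ∀ t : bs, δ (e t) = 0 := fun t => hs0C (hbsub t.2)
  have hind' : ∀ bb : bs → U, (∀ i, bb i ∈ L ∧ δ (bb i) = 0) →
      ∑ i, bb i * e i = 0 → ∀ i, bb i = 0 := by
    intro bb hbb hsum i
    have h1 : ∑ i, (⟨bb i, hbb i⟩ : ↥CL) • e i = 0 := by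
      rw [← hsum]
      exact Finset.sum_congr rfl (fun t _ => rfl)
    have := Fintype.linearIndependent_iff.mp hbli (fun i => (⟨bb i, hbb i⟩ : ↥CL)) h1 i
    exact Subtype.ext_iff.mp this
  have hrep : ∀ u : U, u ∈ s0 → ∃ γ : bs → ↥CL, ∑ t, (γ t : U) * e t = u := by
    intro u hu
    have h1 : u ∈ Submodule.span (↥CL) (Set.range e) := by
      rw [he_def, Subtype.range_val, hbspan]
      exact Submodule.subset_span hu
    obtain ⟨γ, hγ⟩ := (Submodule.mem_span_range_iff_exists_fun (↥CL)).mp h1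
    exact ⟨γ, by rw [← hγ]; exact Finset.sum_congr rfl fun t _ => rfl⟩
  set Γ : U → bs → U := fun u t => if hu : u ∈ s0 then ((hrep u hu).choose t : U) else 0
    with hΓdef
  have hΓmem : ∀ u t, Γ u t ∈ CL := by
    intro u t
    by_cases hu : u ∈ s0
    · simp only [hΓdef, dif_pos hu]
      exact ((hrep u hu).choose t).2
    · simp only [hΓdef, dif_neg hu]
      exact CL.zero_mem
  have hΓsum : ∀ u ∈ s0, ∑ t, Γ u t * e t = u := by
    intro u hu
    simp only [hΓdef, dif_pos hu]
    exact (hrep u hu).choose_spec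
  have hΓK : ∀ u t, Γ u t ∈ K := fun u t => hCLK _ (hΓmem u t).1 (hΓmem u t).2
  set R : bs → U := fun t => ∑ u ∈ f.support, (f u : U) * Γ u t with hRdef
  set S : bs → U := fun t => ∑ u ∈ g.support, (g u : U) * Γ u t with hSdef
  have key : ∀ (h : U →₀ ↥K), ↑h.support ⊆ ({u : U | δ u = 0} : Set U) →
      ↑h.support ⊆ s0 →
      h.sum (fun mi c => c • mi) = ∑ t, (∑ u ∈ h.support, (h u : U) * Γ u t) * e t := by
    intro h _ hsub
    rw [Finsupp.sum]
    have step1 : ∀ u ∈ h.support, (h u) • u = (h u : U) * (∑ t, Γ u t * e t) := by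
      intro u hu
      rw [hΓsum u (hsub hu)]
      rfl
    rw [Finset.sum_congr rfl step1]
    simp only [Finset.mul_sum]
    rw [Finset.sum_comm]
    refine Finset.sum_congr rfl fun t _ => ?_
    rw [Finset.sum_mul]
    exact Finset.sum_congr rfl fun u _ => by ring
  have hfs0 : ↑f.support ⊆ s0 := fun u hu =>
    Finset.mem_coe.mpr (Finset.mem_union_left _ (Finset.mem_coe.mp hu))
  have hgs0 : ↑g.support ⊆ s0 := fun u hu =>
    Finset.mem_coe.mpr (Finset.mem_union_right _ (Finset.mem_coe.mp hu))
  have hrR : r = ∑ t, R t * e t := by rw [← hfsum]; exact key f hfsupp hfs0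
  have hsS : s = ∑ t, S t * e t := by rw [← hgsum]; exact key g hgsupp hgs0
  have hRK : ∀ t, R t ∈ K := fun t => sum_mem fun u _ => K.mul_mem (f u).2 (hΓK u t)
  have hSK : ∀ t, S t ∈ K := fun t => sum_mem fun u _ => K.mul_mem (g u).2 (hΓK u t)
  have hxs : r = x * s := by rw [← hdiv]; field_simp
  have hzero : ∑ t, (R t - x * S t) * e t = 0 := by
    have hsplit : ∑ t, (R t - x * S t) * e t = (∑ t, R t * e t) - x * ∑ t, S t * e t := by
      rw [Finset.mul_sum, ← Finset.sum_sub_distrib]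
      exact Finset.sum_congr rfl fun t _ => by ring
    rw [hsplit, ← hrR, ← hsS, hxs]; ring
  have hcoef : ∀ t, R t - x * S t = 0 :=
    aux_indep hadd hmul L hL e he hind' _
      (fun t => L.sub_mem (hKL (hRK t)) (L.mul_mem hxL (hKL (hSK t)))) hzero
  have hex : ∃ t, S t ≠ 0 := by
    by_contra hS
    push_neg at hS
    apply hs0
    rw [hsS]
    simp [hS]
  obtain ⟨t, ht⟩ := hex
  have hxeq : x = R t / S t := by
    have h := hcoef t
    field_simp
    linear_combination -h
  rw [hxeq]
  exact K.div_mem (hRK t) (hSK t)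

end auxDiff

/-- Lemma 3.1(ii): for differential subfields `K ⊆ L` of a differential field `U`
with constants `C`, one has `K(C) ∩ L = K` if and only if `C_K = C_L`. -/
theorem adjoin_constants_inter_eq_iff_same_constants
    (U : Type*) [Field U] [CharZero U] (δ : U → U)
    (hadd : ∀ a b, δ (a + b) = δ a + δ b)
    (hmul : ∀ a b, δ (a * b) = a * δ b + b * δ a)
    (K L : Subfield U)
    (hK : ∀ x ∈ K, δ x ∈ K)
    (hL : ∀ x ∈ L, δ x ∈ L)
    (hKL : K ≤ L) :
    (Subfield.closure ((K : Set U) ∪ {x : U | δ x = 0}) ⊓ L = K) ↔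
      ((K : Set U) ∩ {x : U | δ x = 0} = (L : Set U) ∩ {x : U | δ x = 0}) := by
  constructor
  · intro h
    apply Set.Subset.antisymm
    · rintro u ⟨huK, huC⟩
      exact ⟨hKL huK, huC⟩
    · rintro u ⟨huL, huC⟩
      have h1 : u ∈ Subfield.closure ((K : Set U) ∪ {x : U | δ x = 0}) :=
        Subfield.subset_closure (Or.inr huC)
      have h2 : u ∈ Subfield.closure ((K : Set U) ∪ {x : U | δ x = 0}) ⊓ L := ⟨h1, huL⟩
      rw [h] at h2
      exact ⟨h2, huC⟩
  · intro hsame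
    apply le_antisymm
    · rintro x ⟨hx1, hx2⟩
      exact aux_mem_K hadd hmul K L hL hKL hsame hx1 hx2
    · exact le_inf (fun x hx => Subfield.subset_closure (Or.inl hx)) hKL
end
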